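/- arXiv:2106.10953 — 4 statements merged into one kernel-verified Lean document; each statement's English description precedes it below -/
import Mathlib

section
/- Let G be a finite group with irreducible characters χ₁,…,χ_r. Then G is almost monomial (i.e., for every pair of distinct irreducible characters χ ≠ ψ there exist a subgroup H ≤ G and a linear character λ of H such that χ is a constituent of the induced character λ^G and ψ is not) if and only if for every k ∈ {1,…,r} there exist subgroups H₁,…,H_m of G and linear characters λ₁,…,λ_m of them such that the set of irreducible constituents of λ₁^G + ⋯ + λ_m^G is exactly Irr(G) \ {χ_k}. -/
open scoped Classical BigOperators

noncomputable def cInd {G : Type} [Group G] [Fintype G] (H : Subgroup G)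
    (f : H → ℂ) : G → ℂ := fun g =>
  (Nat.card H : ℂ)⁻¹ *
    ∑ x : G, if h : x⁻¹ * g * x ∈ H then f ⟨x⁻¹ * g * x, h⟩ else 0

noncomputable def cInner (G : Type) [Group G] [Fintype G] (φ ψ : G → ℂ) : ℂ :=
  (Nat.card G : ℂ)⁻¹ * ∑ g : G, φ g * starRingEnd ℂ (ψ g)

/-- `χ` is the character of some finite-dimensional complex representation of `G`. -/
def IsChar (G : Type) [Group G] (χ : G → ℂ) : Prop :=
  ∃ V : FDRep ℂ G, FDRep.character V = χ

/-- `χ` is the character of some irreducible complex representation of `G`. -/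
def IsIrrChar (G : Type) [Group G] (χ : G → ℂ) : Prop :=
  ∃ V : FDRep ℂ G, CategoryTheory.Simple V ∧ FDRep.character V = χ

/-- `χ` is a constituent of `θ`: their inner product is nonzero. -/
def IsConstituent {G : Type} [Group G] [Fintype G] (χ θ : G → ℂ) : Prop :=
  cInner G θ χ ≠ 0

def charKer {G : Type} [Group G] (χ : G → ℂ) : Set G := {g | χ g = χ 1}

/-- The supercharacter attached to a set `X` of irreducible characters. -/
noncomputable def superchar {G : Type} [Group G] (X : Set (G → ℂ)) : G → ℂ :=
  fun g => ∑ᶠ ψ ∈ X, ψ 1 * ψ g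

def Monomial (G : Type) [Group G] [Fintype G] : Prop :=
  ∀ χ : G → ℂ, IsIrrChar G χ →
    ∃ (H : Subgroup G) (lam : H →* ℂ), cInd H (fun h => lam h) = χ

def QuasiMonomial (G : Type) [Group G] [Fintype G] : Prop :=
  ∀ χ : G → ℂ, IsIrrChar G χ →
    ∃ (H : Subgroup G) (lam : H →* ℂ) (d : ℕ), 0 < d ∧
      cInd H (fun h => lam h) = fun g => (d : ℂ) * χ g

def AlmostMonomial (G : Type) [Group G] [Fintype G] : Prop :=
  ∀ χ ψ : G → ℂ, IsIrrChar G χ → IsIrrChar G ψ → χ ≠ ψ →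
    ∃ (H : Subgroup G) (lam : H →* ℂ),
      IsConstituent χ (cInd H (fun h => lam h)) ∧
      ¬ IsConstituent ψ (cInd H (fun h => lam h))

/-- A supercharacter theory of a finite group `G` (Diaconis–Isaacs). -/
structure SCTheory (G : Type) [Group G] where
  XX : Set (Set (G → ℂ))
  KK : Set (Set G)
  XX_nonempty : ∀ X ∈ XX, X.Nonempty
  XX_disj : ∀ X ∈ XX, ∀ Y ∈ XX, X ≠ Y → Disjoint X Y
  XX_cover : ⋃₀ XX = {χ | IsIrrChar G χ}
  KK_nonempty : ∀ K ∈ KK, K.Nonempty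
  KK_disj : ∀ K ∈ KK, ∀ L ∈ KK, K ≠ L → Disjoint K L
  KK_cover : ⋃₀ KK = Set.univ
  one_mem : ({1} : Set G) ∈ KK
  card_eq : Nat.card XX = Nat.card KK
  const : ∀ X ∈ XX, ∀ K ∈ KK, ∀ g ∈ K, ∀ g' ∈ K, superchar X g = superchar X g'

def CQuasiMonomial {G : Type} [Group G] [Fintype G] (C : SCTheory G) : Prop :=
  ∀ X ∈ C.XX, ∃ (t : ℕ) (H : Fin t → Subgroup G) (lam : ∀ i, (H i) →* ℂ) (d : ℕ),
    0 < d ∧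
    (∑ i, cInd (H i) (fun h => lam i h)) = fun g => (d : ℂ) * superchar X g

def CAlmostMonomial {G : Type} [Group G] [Fintype G] (C : SCTheory G) : Prop :=
  ∀ Xk ∈ C.XX, ∀ Xl ∈ C.XX, Xk ≠ Xl →
    ∃ (t : ℕ) (H : Fin t → Subgroup G) (lam : ∀ i, (H i) →* ℂ)
      (α : Set (G → ℂ) → ℕ),
      0 < α Xk ∧ α Xl = 0 ∧
      (∑ i, cInd (H i) (fun h => lam i h)) =
        fun g => ∑ᶠ X ∈ C.XX, (α X : ℂ) * superchar X g

/-- `N` is `C`-normal: a union of superclasses. -/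
def CNormal {G : Type} [Group G] (C : SCTheory G) (N : Subgroup G) : Prop :=
  ∃ S ⊆ C.KK, (N : Set G) = ⋃₀ S

/-- `Cq` is the supercharacter theory induced by `C` on `G ⧸ N`. -/
def IsQuotientTheory {G : Type} [Group G] (C : SCTheory G)
    (N : Subgroup G) [N.Normal] (Cq : SCTheory (G ⧸ N)) : Prop :=
  Cq.XX = {Y | ∃ X ∈ C.XX, (∀ χ ∈ X, ∀ n ∈ N, χ n = χ 1) ∧
      Y = {χ' : G ⧸ N → ℂ | (fun g : G => χ' (g : G ⧸ N)) ∈ X}} ∧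
  Cq.KK = {K' | ∃ K ∈ C.KK, K' = (fun g : G => (g : G ⧸ N)) '' K}

/-- The part `X × X'` of `Irr(G × G')`, via external products of characters. -/
def prodPart {G G' : Type} (X : Set (G → ℂ)) (X' : Set (G' → ℂ)) :
    Set (G × G' → ℂ) :=
  {χ | ∃ φ ∈ X, ∃ ψ ∈ X', χ = fun p => φ p.1 * ψ p.2}

/-- `Cp` is the product supercharacter theory `C × C'` on `G × G'`. -/
def IsProdTheory {G G' : Type} [Group G] [Group G'] (C : SCTheory G)
    (C' : SCTheory G') (Cp : SCTheory (G × G')) : Prop :=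
  Cp.XX = {S | ∃ X ∈ C.XX, ∃ X' ∈ C'.XX, S = prodPart X X'} ∧
  Cp.KK = {S | ∃ K ∈ C.KK, ∃ K' ∈ C'.KK, S = K ×ˢ K'}
section AuxAM

open FDRep

variable {G : Type} [Group G] [Fintype G]

private lemma sum_dite_subgroup (H : Subgroup G) (f : ↥H → ℂ) :
    ∑ g : G, (if h : g ∈ H then f ⟨g, h⟩ else 0) = ∑ h : ↥H, f h := by
  classical
  have h1 : ∑ g : G, (if h : g ∈ H then f ⟨g, h⟩ else 0)
      = ∑ g ∈ Finset.univ.filter (· ∈ H), (if h : g ∈ H then f ⟨g, h⟩ else 0) :=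
    (Finset.sum_subset (Finset.filter_subset _ _)
      (fun x _ hx => by
        rw [dif_neg]; intro hxH; exact hx (Finset.mem_filter.mpr ⟨Finset.mem_univ x, hxH⟩))).symm
  rw [h1, Finset.sum_subtype (p := (· ∈ H)) _ (fun x => by simp)]
  exact Finset.sum_congr rfl fun x _ => by rw [dif_pos x.2]

private lemma cInner_sum {m : ℕ} (f : Fin m → G → ℂ) (ψ : G → ℂ) :
    cInner G (∑ i, f i) ψ = ∑ i, cInner G (f i) ψ := by
  unfold cInner
  simp only [Finset.sum_apply, Finset.sum_mul]
  rw [Finset.sum_comm, Finset.mul_sum]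

private lemma cInner_cInd (H : Subgroup G) (lam : ↥H →* ℂ) (ψ : G → ℂ)
    (hψ : ∀ x g : G, ψ (x * g * x⁻¹) = ψ g) :
    cInner G (cInd H (fun h => lam h)) ψ
      = (Fintype.card ↥H : ℂ)⁻¹ * ∑ h : ↥H, lam h * (starRingEnd ℂ) (ψ h) := by
  classical
  unfold cInner cInd
  simp only [Nat.card_eq_fintype_card]
  have key : ∀ x : G, (∑ g : G,
      (if h : x⁻¹ * g * x ∈ H then lam ⟨x⁻¹ * g * x, h⟩ else 0) * (starRingEnd ℂ) (ψ g))
      = ∑ h : ↥H, lam h * (starRingEnd ℂ) (ψ (h : G)) := by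
    intro x
    rw [← sum_dite_subgroup H (fun h => lam h * (starRingEnd ℂ) (ψ (h : G)))]
    refine Fintype.sum_equiv ((Equiv.mulLeft x⁻¹).trans (Equiv.mulRight x)) _ _ ?_
    intro g
    simp only [Equiv.trans_apply, Equiv.coe_mulLeft, Equiv.coe_mulRight]
    have h2 : ψ (x⁻¹ * g * x) = ψ g := by simpa using hψ x⁻¹ g
    by_cases hg : x⁻¹ * g * x ∈ H
    · rw [dif_pos hg]; simp [hg, h2]
    · rw [dif_neg hg]; simp [hg]
  have step : ∀ g : G, ((Fintype.card ↥H : ℂ)⁻¹ *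
        ∑ x : G, (if h : x⁻¹ * g * x ∈ H then lam ⟨x⁻¹ * g * x, h⟩ else 0))
        * (starRingEnd ℂ) (ψ g)
      = (Fintype.card ↥H : ℂ)⁻¹ *
        ∑ x : G, (if h : x⁻¹ * g * x ∈ H then lam ⟨x⁻¹ * g * x, h⟩ else 0)
          * (starRingEnd ℂ) (ψ g) := by
    intro g; rw [mul_assoc, Finset.sum_mul]
  simp only [step]
  rw [← Finset.mul_sum, Finset.sum_comm]
  rw [Finset.sum_congr rfl fun x _ => key x]
  rw [Finset.sum_const, Finset.card_univ, nsmul_eq_mul]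
  have hG0 : (Fintype.card G : ℂ) ≠ 0 := by exact_mod_cast Fintype.card_ne_zero
  field_simp

end AuxAM
section AuxAM2

open FDRep

variable {G : Type} [Group G] [Fintype G]

private lemma cInd_inner_nat (H : Subgroup G) (lam : ↥H →* ℂ) (V : FDRep ℂ G) :
    ∃ n : ℕ, cInner G (cInd H (fun h => lam h)) (FDRep.character V) = (n : ℂ) := by
  classical
  set d := Module.finrank ℂ V with hd
  let b : Module.Basis (Fin d) ℂ V := Module.finBasis ℂ V
  let A : ↥H → Matrix (Fin d) (Fin d) ℂ :=
    fun h => ((LinearMap.toMatrix b b) (V.ρ (h : G))).map (starRingEnd ℂ)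
  have hA : ∀ a c : ↥H, A (a * c) = A a * A c := by
    intro a c
    simp only [A]
    rw [Subgroup.coe_mul, map_mul, LinearMap.toMatrix_mul, Matrix.map_mul]
  have hA1 : A 1 = 1 := by
    simp only [A]
    rw [OneMemClass.coe_one, map_one, LinearMap.toMatrix_one]
    exact Matrix.map_one _ (map_zero _) (map_one _)
  let ρW : Representation ℂ ↥H (Fin d → ℂ) :=
    { toFun := fun h => lam h • Matrix.toLin' (A h)
      map_one' := by
        simp only [hA1, map_one, one_smul]
        rw [Matrix.toLin'_one]
        rfl
      map_mul' := by
        intro a c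
        simp only [map_mul, hA, smul_mul_smul_comm]
        congr 1
        rw [Matrix.toLin'_mul]
        rfl }
  let W : FDRep ℂ ↥H := FDRep.of ρW
  have hchar : ∀ h : ↥H, W.character h
      = lam h * (starRingEnd ℂ) (V.character (h : G)) := by
    intro h
    show LinearMap.trace ℂ _ (ρW h) = _
    have hr : ρW h = lam h • Matrix.toLin' (A h) := rfl
    rw [hr, map_smul, smul_eq_mul]
    congr 1
    rw [LinearMap.trace_eq_matrix_trace ℂ (Pi.basisFun ℂ (Fin d)),
      LinearMap.toMatrix_eq_toMatrix', LinearMap.toMatrix'_toLin']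
    rw [FDRep.character, LinearMap.trace_eq_matrix_trace ℂ b]
    simp only [A, Matrix.trace, Matrix.diag, Matrix.map_apply, map_sum]
  haveI : Invertible (Nat.card ↥H : ℂ) :=
    invertibleOfNonzero (Nat.cast_ne_zero.mpr Nat.card_pos.ne')
  have havg := FDRep.average_char_eq_finrank_invariants W
  refine ⟨Module.finrank ℂ (Representation.invariants W.ρ), ?_⟩
  have hclass : ∀ x g : G, V.character (x * g * x⁻¹) = V.character g :=
    fun x g => FDRep.char_conj V g x
  rw [cInner_cInd H lam _ hclass]
  rw [← havg, Nat.card_eq_fintype_card]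
  congr 1
  exact Finset.sum_congr rfl fun h _ => (hchar h).symm

end AuxAM2
section AuxAM3

open FDRep

variable {G : Type} [Group G] [Fintype G]

private lemma char_orthog (V W : FDRep ℂ G)
    (hV : CategoryTheory.Simple V) (hW : CategoryTheory.Simple W) :
    ∑ g : G, V.character g * W.character g⁻¹
      = if V.character = W.character then (Fintype.card G : ℂ) else 0 := by
  haveI := hV; haveI := hW
  letI : Fintype G := inferInstanceAs (Fintype G)
  letI : Invertible ((Nat.card G) : ℂ) :=
    invertibleOfNonzero (by exact Nat.cast_ne_zero.mpr Nat.card_pos.ne')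
  have hG0 : (Fintype.card G : ℂ) ≠ 0 := by exact_mod_cast Fintype.card_ne_zero
  by_cases hc : V.character = W.character
  · rw [if_pos hc]
    have h2a := FDRep.char_orthonormal (k := ℂ) (G := G) W W
    rw [if_pos ⟨CategoryTheory.Iso.refl W⟩, Nat.card_eq_fintype_card] at h2a
    have h2 : (Fintype.card G : ℂ)⁻¹ * ∑ g : G, W.character g * W.character g⁻¹ = 1 := h2a
    have h3 : ∑ g : G, V.character g * W.character g⁻¹
        = ∑ g : G, W.character g * W.character g⁻¹ := by
      refine Finset.sum_congr rfl fun g _ => ?_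
      rw [show V.character g = W.character g from congrFun hc g]
    rw [h3]
    exact ((inv_mul_eq_one₀ hG0).mp h2).symm
  · rw [if_neg hc]
    have hni : ¬ Nonempty (V ≅ W) := fun ⟨i⟩ => hc (FDRep.char_iso i)
    have h := FDRep.char_orthonormal (k := ℂ) (G := G) V W
    rw [if_neg hni, Nat.card_eq_fintype_card] at h
    have h' : (Fintype.card G : ℂ)⁻¹ * ∑ g : G, V.character g * W.character g⁻¹ = 0 := by
      simpa using h
    rcases mul_eq_zero.mp h' with h'' | h''
    · exact absurd h'' (inv_ne_zero hG0)
    · exact h''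

private lemma irrChar_finite : {χ : G → ℂ | IsIrrChar G χ}.Finite := by
  classical
  refine LinearIndependent.setFinite (R := ℂ) ?_
  rw [linearIndependent_iff']
  intro s c hsum i hi
  obtain ⟨Vi, hVis, hVic⟩ := i.2
  let T : (G → ℂ) →ₗ[ℂ] ℂ :=
    { toFun := fun φ => ∑ g : G, φ g * Vi.character g⁻¹
      map_add' := by
        intro φ₁ φ₂
        simp [add_mul, Finset.sum_add_distrib]
      map_smul' := by
        intro a φ
        simp [Finset.mul_sum, mul_assoc] }
  have h0 := congrArg T hsum
  rw [map_sum, map_zero] at h0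
  have hterm : ∀ j ∈ s, T ((c j) • (j : G → ℂ))
      = c j * (if (j : G → ℂ) = (i : G → ℂ) then (Fintype.card G : ℂ) else 0) := by
    intro j _
    obtain ⟨Vj, hVjs, hVjc⟩ := j.2
    rw [map_smul, smul_eq_mul]
    congr 1
    have : T (j : G → ℂ) = ∑ g : G, Vj.character g * Vi.character g⁻¹ := by
      simp only [T, LinearMap.coe_mk, AddHom.coe_mk, hVjc]
    rw [this, char_orthog Vj Vi hVjs hVis, hVjc, hVic]
  rw [Finset.sum_congr rfl hterm] at h0
  rw [Finset.sum_eq_single i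
    (fun j _ hji => by
      rw [if_neg (fun hc => hji (Subtype.coe_injective hc)), mul_zero])
    (fun his => absurd hi his)] at h0
  rw [if_pos rfl] at h0
  have hG0 : (Fintype.card G : ℂ) ≠ 0 := by exact_mod_cast Fintype.card_ne_zero
  rcases mul_eq_zero.mp h0 with h | h
  · exact h
  · exact absurd h hG0

end AuxAM3
/-- Proposition 1.3: `G` is almost monomial iff for every irreducible character `χk`
there are subgroups and linear characters whose induced sum has constituent set
exactly `Irr(G) \ {χk}`. -/
theorem almostMonomial_iff_complement (G : Type) [Group G] [Fintype G] :
    AlmostMonomial G ↔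
      ∀ χk : G → ℂ, IsIrrChar G χk →
        ∃ (m : ℕ) (H : Fin m → Subgroup G) (lam : ∀ i, (H i) →* ℂ),
          {χ | IsIrrChar G χ ∧ IsConstituent χ (∑ i, cInd (H i) (fun h => lam i h))}
            = {χ | IsIrrChar G χ} \ {χk} := by
  classical
  constructor
  · intro hAM χk hχk
    have hS : ({χ : G → ℂ | IsIrrChar G χ} \ {χk}).Finite :=
      irrChar_finite.diff
    set s : Finset (G → ℂ) := hS.toFinset with hs
    set m := s.card with hm
    let e : Fin m ≃ {x // x ∈ s} := s.equivFin.symm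
    have hmem : ∀ i : Fin m, ((e i : G → ℂ) ∈ {χ : G → ℂ | IsIrrChar G χ} \ {χk}) := by
      intro i
      exact (Set.Finite.mem_toFinset hS).mp (e i).2
    have hex : ∀ i : Fin m, ∃ (H : Subgroup G) (lamH : ↥H →* ℂ),
        IsConstituent (e i : G → ℂ) (cInd H fun h => lamH h) ∧
        ¬ IsConstituent χk (cInd H fun h => lamH h) := by
      intro i
      refine hAM _ χk (hmem i).1 hχk ?_
      intro hEq
      exact (hmem i).2 (by rw [hEq]; rfl)
    choose Hf lamf hcons hncons using hex
    refine ⟨m, Hf, lamf, ?_⟩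
    ext χ
    simp only [Set.mem_setOf_eq, Set.mem_diff, Set.mem_singleton_iff]
    constructor
    · rintro ⟨hirr, hco⟩
      refine ⟨hirr, ?_⟩
      intro hEq
      subst hEq
      apply hco
      show cInner G _ _ = 0
      rw [cInner_sum]
      exact Finset.sum_eq_zero fun i _ => not_not.mp (hncons i)
    · rintro ⟨hirr, hne⟩
      refine ⟨hirr, ?_⟩
      have hχs : χ ∈ s := (Set.Finite.mem_toFinset hS).mpr ⟨hirr, hne⟩
      set j : Fin m := e.symm ⟨χ, hχs⟩ with hj
      have hej : (e j : G → ℂ) = χ := by rw [hj, Equiv.apply_symm_apply]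
      obtain ⟨V, hVsimple, hVchar⟩ := hirr
      have hnat : ∀ i : Fin m,
          ∃ n : ℕ, cInner G (cInd (Hf i) fun h => lamf i h) χ = (n : ℂ) := by
        intro i
        rw [← hVchar]
        exact cInd_inner_nat (Hf i) (lamf i) V
      choose nf hnf using hnat
      show cInner G (∑ i, cInd (Hf i) fun h => lamf i h) χ ≠ 0
      rw [cInner_sum]
      simp only [hnf]
      rw [← Nat.cast_sum]
      rw [Nat.cast_ne_zero]
      intro hzero
      have hj0 : nf j = 0 :=
        Finset.sum_eq_zero_iff.mp hzero j (Finset.mem_univ j)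
      apply hcons j
      show cInner G _ _ = 0
      rw [hej, hnf j, hj0, Nat.cast_zero]
  · intro hC χ ψ hχ hψ hne
    obtain ⟨m, Hf, lamf, hset⟩ := hC ψ hψ
    have hχmem : χ ∈ {χ' : G → ℂ | IsIrrChar G χ'
        ∧ IsConstituent χ' (∑ i, cInd (Hf i) fun h => lamf i h)} := by
      rw [hset]
      exact ⟨hχ, hne⟩
    obtain ⟨-, hco⟩ := hχmem
    have hψnot : ¬ IsConstituent ψ (∑ i, cInd (Hf i) fun h => lamf i h) := by
      intro hcontra
      have hmem : ψ ∈ {χ' : G → ℂ | IsIrrChar G χ'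
          ∧ IsConstituent χ' (∑ i, cInd (Hf i) fun h => lamf i h)} := ⟨hψ, hcontra⟩
      rw [hset] at hmem
      exact hmem.2 rfl
    obtain ⟨V, hVs, hVc⟩ := hψ
    have hnat : ∀ i : Fin m,
        ∃ n : ℕ, cInner G (cInd (Hf i) fun h => lamf i h) ψ = (n : ℂ) := by
      intro i
      rw [← hVc]
      exact cInd_inner_nat (Hf i) (lamf i) V
    choose nf hnf using hnat
    have hzero : ∀ i, cInner G (cInd (Hf i) fun h => lamf i h) ψ = 0 := by
      have h0 : ((∑ i, nf i : ℕ) : ℂ) = 0 := by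
        rw [Nat.cast_sum]
        have := not_not.mp hψnot
        rw [cInner_sum] at this
        simp only [hnf] at this
        exact this
      rw [Nat.cast_eq_zero] at h0
      intro i
      rw [hnf i, Finset.sum_eq_zero_iff.mp h0 i (Finset.mem_univ i), Nat.cast_zero]
    have hsum : cInner G (∑ i, cInd (Hf i) fun h => lamf i h) χ ≠ 0 := hco
    rw [cInner_sum] at hsum
    obtain ⟨i, -, hi⟩ := Finset.exists_ne_zero_of_sum_ne_zero hsum
    exact ⟨Hf i, lamf i, hi, fun hcon => hcon (hzero i)⟩
end

section
/- Let G be a finite group with supercharacter theories C and C′ such that C ⪯ C′ (every part of the character partition of C is contained in a part of that of C′). If G is C-quasi-monomial, then G is C′-quasi-monomial. -/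
open scoped Classical BigOperators

section AuxQM

open Classical

lemma irr_orthog {G : Type} [Group G] [Fintype G] {χ ψ : G → ℂ}
    (hχ : IsIrrChar G χ) (hψ : IsIrrChar G ψ) :
    ∑ x : G, χ x * ψ x⁻¹ = if χ = ψ then (Fintype.card G : ℂ) else 0 := by
  obtain ⟨V, hVs, rfl⟩ := hχ
  obtain ⟨W, hWs, rfl⟩ := hψ
  have hc : (Fintype.card G : ℂ) ≠ 0 := by exact_mod_cast Fintype.card_ne_zero
  haveI hinv : Invertible ((Fintype.card G : ℂ)) := invertibleOfNonzero hc
  have hc2 : (Nat.card G : ℂ) ≠ 0 := by rw [Nat.card_eq_fintype_card]; exact hc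
  haveI hinv2 : Invertible (Nat.card G : ℂ) := invertibleOfNonzero hc2
  by_cases h : FDRep.character V = FDRep.character W
  · rw [if_pos h, h]
    have key := FDRep.char_orthonormal W W
    rw [if_pos ⟨CategoryTheory.Iso.refl W⟩] at key
    have h3 := congrArg (fun z => (Nat.card G : ℂ) * z) key
    simp only [← mul_assoc, mul_inv_cancel₀ hc2, one_mul, mul_one, Nat.cast_one] at h3
    rw [← Nat.card_eq_fintype_card]
    exact h3
  · rw [if_neg h]
    have key := FDRep.char_orthonormal V W
    have hni : ¬ Nonempty (V ≅ W) := fun ⟨i⟩ => h (FDRep.char_iso i)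
    rw [if_neg hni] at key
    have h3 := congrArg (fun z => (Nat.card G : ℂ) * z) key
    simp only [← mul_assoc, mul_inv_cancel₀ hc2, one_mul, mul_one, mul_zero, Nat.cast_zero] at h3
    exact h3

lemma irrChar_setFinite (G : Type) [Group G] [Fintype G] :
    {χ : G → ℂ | IsIrrChar G χ}.Finite := by
  have hc : (Fintype.card G : ℂ) ≠ 0 := by exact_mod_cast Fintype.card_ne_zero
  have hli : LinearIndependent ℂ
      (fun χ : {χ : G → ℂ | IsIrrChar G χ} => (χ : G → ℂ)) := by
    rw [linearIndependent_iff']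
    intro s g hsum i hi
    have happ : ∀ x : G, (∑ j ∈ s, g j * (j : G → ℂ) x) = 0 := by
      intro x
      have := congrFun hsum x
      simpa [Finset.sum_apply] using this
    have h0 : ∑ j ∈ s, g j * (∑ x : G, (j : G → ℂ) x * (i : G → ℂ) x⁻¹) = 0 := by
      calc ∑ j ∈ s, g j * (∑ x : G, (j : G → ℂ) x * (i : G → ℂ) x⁻¹)
          = ∑ j ∈ s, ∑ x : G, g j * (j : G → ℂ) x * (i : G → ℂ) x⁻¹ := by
            refine Finset.sum_congr rfl fun j _ => ?_
            rw [Finset.mul_sum]; exact Finset.sum_congr rfl fun x _ => by ring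
        _ = ∑ x : G, (∑ j ∈ s, g j * (j : G → ℂ) x) * (i : G → ℂ) x⁻¹ := by
            rw [Finset.sum_comm]
            exact Finset.sum_congr rfl fun x _ => (Finset.sum_mul ..).symm
        _ = 0 := by simp [happ]
    have hrw : ∀ j ∈ s, g j * (∑ x : G, (j : G → ℂ) x * (i : G → ℂ) x⁻¹)
        = if j = i then g j * (Fintype.card G : ℂ) else 0 := by
      intro j _
      rw [irr_orthog j.2 i.2]
      by_cases hji : j = i
      · simp [hji]
      · have : (j : G → ℂ) ≠ (i : G → ℂ) := fun he => hji (Subtype.coe_injective he)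
        simp [hji, this]
    rw [Finset.sum_congr rfl hrw, Finset.sum_ite_eq' s i (fun j => g j * _),
      if_pos hi] at h0
    exact (mul_eq_zero.mp h0).resolve_right hc
  exact hli.setFinite

lemma sct_part_finite {G : Type} [Group G] [Fintype G] (C : SCTheory G)
    {X : Set (G → ℂ)} (hX : X ∈ C.XX) : X.Finite :=
  (irrChar_setFinite G).subset (by
    rw [← C.XX_cover]; exact Set.subset_sUnion_of_mem hX)

lemma sct_XX_finite {G : Type} [Group G] [Fintype G] (C : SCTheory G) :
    C.XX.Finite := by
  classical
  set f : Set (G → ℂ) → (G → ℂ) :=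
    fun X => if h : X.Nonempty then h.choose else 0 with hf
  have hmem : ∀ X ∈ C.XX, f X ∈ X := by
    intro X hX
    have h := C.XX_nonempty X hX
    simp only [hf, dif_pos h]
    exact h.choose_spec
  apply Set.Finite.of_finite_image (f := f)
  · apply (irrChar_setFinite G).subset
    rintro _ ⟨X, hX, rfl⟩
    have hm : f X ∈ ⋃₀ C.XX := ⟨X, hX, hmem X hX⟩
    rw [C.XX_cover] at hm
    exact hm
  · intro X hX Y hY hfe
    by_contra hne
    exact Set.disjoint_left.mp (C.XX_disj X hX Y hY hne) (hmem X hX)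
      (hfe ▸ hmem Y hY)

lemma sum_cInd_fin {G : Type} [Group G] [Fintype G] {ι : Type} [Fintype ι]
    (H : ι → Subgroup G) (lam : ∀ i, (H i) →* ℂ) :
    ∃ (T : ℕ) (HH : Fin T → Subgroup G) (LL : ∀ i, (HH i) →* ℂ),
      (∑ i, cInd (HH i) fun h => LL i h) = ∑ i, cInd (H i) fun h => lam i h := by
  refine ⟨Fintype.card ι, fun j => H ((Fintype.equivFin ι).symm j),
    fun j => lam _, ?_⟩
  exact Fintype.sum_equiv (Fintype.equivFin ι).symm _ _ (fun j => rfl)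

end AuxQM

/-- Proposition 2.4(2): if `C ⪯ C'` and `G` is `C`-quasi-monomial then `G` is
`C'`-quasi-monomial. -/
theorem cQuasiMonomial_of_le (G : Type) [Group G] [Fintype G]
    (C C' : SCTheory G) (hle : ∀ X ∈ C.XX, ∃ X' ∈ C'.XX, X ⊆ X')
    (h : CQuasiMonomial C) : CQuasiMonomial C' := by
  intro X' hX'
  classical
  set S : Set (Set (G → ℂ)) := {X | X ∈ C.XX ∧ X ⊆ X'} with hS
  have hSfin : S.Finite := (sct_XX_finite C).subset fun X hX => hX.1
  have hUnion : ⋃₀ S = X' := by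
    apply Set.Subset.antisymm
    · rintro χ ⟨X, hX, hχ⟩; exact hX.2 hχ
    · intro χ hχ
      have hirr : IsIrrChar G χ := by
        have hm : χ ∈ ⋃₀ C'.XX := ⟨X', hX', hχ⟩
        rw [C'.XX_cover] at hm; exact hm
      have hm : χ ∈ ⋃₀ C.XX := by rw [C.XX_cover]; exact hirr
      obtain ⟨X, hX, hχX⟩ := hm
      obtain ⟨X'', hX'', hsub⟩ := hle X hX
      have hXX : X'' = X' := by
        by_contra hne
        exact Set.disjoint_left.mp (C'.XX_disj X'' hX'' X' hX' hne) (hsub hχX) hχ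
      exact ⟨X, ⟨hX, hXX ▸ hsub⟩, hχX⟩
  set Sf := hSfin.toFinset with hSfdef
  have hSfc : (Sf : Set (Set (G → ℂ))) = S := hSfin.coe_toFinset
  have hsup : ∀ g : G, superchar X' g = ∑ X ∈ Sf, superchar X g := by
    intro g
    have h1 : superchar X' g = ∑ᶠ ψ ∈ ⋃₀ S, (ψ 1 * ψ g) := by rw [hUnion]; rfl
    rw [h1, finsum_mem_sUnion (f := fun ψ => ψ 1 * ψ g)
      (fun X hX Y hY hne => C.XX_disj X hX.1 Y hY.1 hne) hSfin
      (fun X hX => sct_part_finite C hX.1), ← hSfc, finsum_mem_coe_finset]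
    rfl
  have hdata : ∀ X : ↥Sf, ∃ (t : ℕ) (H : Fin t → Subgroup G)
      (lam : ∀ i, (H i) →* ℂ) (d : ℕ), 0 < d ∧
      (∑ i, cInd (H i) fun h => lam i h)
        = fun g => (d : ℂ) * superchar (X : Set (G → ℂ)) g :=
    fun X => h X ((hSfin.mem_toFinset.mp X.2).1)
  choose t H lam d hd heq using hdata
  set D := ∏ X : ↥Sf, d X with hDdef
  have hD : 0 < D := Finset.prod_pos (fun X _ => hd X)
  have hdvd : ∀ X : ↥Sf, d X ∣ D := fun X =>
    Finset.dvd_prod_of_mem d (Finset.mem_univ X)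
  set m : ↥Sf → ℕ := fun X => D / d X with hmdef
  have hm : ∀ X, m X * d X = D := fun X => Nat.div_mul_cancel (hdvd X)
  obtain ⟨T, HH, LL, hsum⟩ := sum_cInd_fin
    (ι := Σ X : ↥Sf, Fin (m X) × Fin (t X))
    (fun p => H p.1 p.2.2) (fun p => lam p.1 p.2.2)
  refine ⟨T, HH, LL, D, hD, ?_⟩
  rw [hsum]
  funext g
  rw [Finset.sum_apply]
  have hXg : ∀ X : ↥Sf, ∑ k, cInd (H X k) (fun h => lam X k h) g
      = (d X : ℂ) * superchar (X : Set (G → ℂ)) g := by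
    intro X
    have := congrFun (heq X) g
    rw [Finset.sum_apply] at this
    exact this
  calc ∑ p : (Σ X : ↥Sf, Fin (m X) × Fin (t X)),
        cInd (H p.1 p.2.2) (fun h => lam p.1 p.2.2 h) g
      = ∑ X : ↥Sf, ∑ q : Fin (m X) × Fin (t X),
          cInd (H X q.2) (fun h => lam X q.2 h) g := by
        rw [← Finset.univ_sigma_univ, Finset.sum_sigma]
    _ = ∑ X : ↥Sf, ∑ _j : Fin (m X), ∑ k : Fin (t X),
          cInd (H X k) (fun h => lam X k h) g := by
        refine Finset.sum_congr rfl fun X _ => ?_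
        rw [Fintype.sum_prod_type]
    _ = ∑ X : ↥Sf, ((m X * d X : ℕ) : ℂ) * superchar (X : Set (G → ℂ)) g := by
        refine Finset.sum_congr rfl fun X _ => ?_
        rw [Finset.sum_congr rfl fun j _ => hXg X, Finset.sum_const,
          Finset.card_univ, Fintype.card_fin, nsmul_eq_mul]
        push_cast
        ring
    _ = (D : ℂ) * ∑ X ∈ Sf, superchar X g := by
        rw [Finset.mul_sum, ← Finset.sum_coe_sort Sf (fun X => (D : ℂ) * superchar X g)]
        exact Finset.sum_congr rfl fun X _ => by rw [hm X]
    _ = (D : ℂ) * superchar X' g := by rw [hsup g]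
end

section
/- Let G be a finite group with supercharacter theory C, and let N ⊴ G be a C-normal subgroup (a union of superclasses). If G is C-quasi-monomial, then G/N is C^{G/N}-quasi-monomial, where C^{G/N} is the induced supercharacter theory on G/N. -/
open scoped Classical BigOperators

lemma idem_trace_zero {V : Type*} [AddCommGroup V] [Module ℂ V] [FiniteDimensional ℂ V]
    (Q : V →ₗ[ℂ] V) (hQ : Q ∘ₗ Q = Q) (htr : LinearMap.trace ℂ V Q = 0) : Q = 0 := by
  obtain ⟨p, hp⟩ := (LinearMap.isProj_iff_isIdempotentElem Q).mpr hQ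
  have h1 : LinearMap.trace ℂ V Q = (Module.finrank ℂ p : ℂ) := hp.trace
  have h2 : Module.finrank ℂ p = 0 := by exact_mod_cast h1 ▸ htr
  have hbot : p = ⊥ := Submodule.finrank_eq_zero.mp h2
  ext x
  have := hp.map_mem x
  rw [hbot] at this
  simpa using this

lemma char_coset_const {G : Type} [Group G] [Fintype G] (N : Subgroup G)
    (V : FDRep ℂ G) (hker : ∀ n ∈ N, V.character n = V.character 1) :
    ∀ g : G, ∀ n ∈ N, V.character (g * n) = V.character g := by
  classical
  set c : ℂ := (Nat.card N : ℂ) with hc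
  have hcard : c ≠ 0 := by
    rw [hc]
    have : 0 < Nat.card N := Nat.card_pos
    exact_mod_cast this.ne'
  set T : V →ₗ[ℂ] V := ∑ n : N, V.ρ (n : G) with hT
  have hmulT : ∀ m : N, V.ρ (m : G) * T = T := by
    intro m
    rw [hT, Finset.mul_sum]
    exact Fintype.sum_equiv (Equiv.mulLeft m) _ _ (fun n => by
      simp [← map_mul, Equiv.mulLeft])
  have hTT : T * T = c • T := by
    have h1 : T * T = ∑ m : N, V.ρ (m : G) * T := by rw [hT, Finset.sum_mul]
    rw [h1]
    simp only [hmulT]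
    rw [Finset.sum_const, hc, Nat.card_eq_fintype_card, Finset.card_univ]
    exact (Nat.cast_smul_eq_nsmul ℂ _ _).symm
  set P : V →ₗ[ℂ] V := c⁻¹ • T with hP
  have hPP : P * P = P := by
    rw [hP, smul_mul_smul_comm, hTT, smul_smul]
    congr 1
    field_simp
  have htrT : LinearMap.trace ℂ V T = c * (Module.finrank ℂ V : ℂ) := by
    rw [hT, map_sum]
    have heach : ∀ n : N, LinearMap.trace ℂ V (V.ρ (n : G)) = (Module.finrank ℂ V : ℂ) := by
      intro n
      have h2 := hker n n.2
      rw [FDRep.char_one] at h2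
      exact h2
    simp only [heach]
    rw [Finset.sum_const, Finset.card_univ, hc, Nat.card_eq_fintype_card]
    rw [← Nat.cast_smul_eq_nsmul ℂ]
    simp [smul_eq_mul]
  set Q : V →ₗ[ℂ] V := 1 - P with hQdef
  have hQ : Q ∘ₗ Q = Q := by
    show Q * Q = Q
    rw [hQdef, sub_mul, one_mul, mul_sub, mul_one, hPP]
    abel
  have htrQ : LinearMap.trace ℂ V Q = 0 := by
    rw [hQdef, map_sub, map_smul, htrT, LinearMap.trace_one, smul_eq_mul]
    field_simp
    simp
  have hQ0 : Q = 0 := idem_trace_zero Q hQ htrQ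
  have hP1 : P = 1 := by
    have := sub_eq_zero.mp hQ0
    exact this.symm
  have key : ∀ n ∈ N, V.ρ n = 1 := by
    intro n hn
    have h3 : V.ρ n * P = P := by
      rw [hP, mul_smul_comm, hmulT ⟨n, hn⟩]
    rw [hP1, mul_one] at h3
    exact h3
  intro g n hn
  have h4 : V.ρ (g * n) = V.ρ g := by rw [map_mul, key n hn, mul_one]
  simp only [FDRep.character, h4]

lemma sum_hom_nontrivial {K : Type*} [Group K] [Fintype K] (μ : K →* ℂ)
    (hnt : ∃ k : K, μ k ≠ 1) : ∑ k : K, μ k = 0 := by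
  obtain ⟨k₀, hk₀⟩ := hnt
  have h : μ k₀ * ∑ k : K, μ k = ∑ k : K, μ k := by
    rw [Finset.mul_sum]
    exact Fintype.sum_equiv (Equiv.mulLeft k₀) _ _ (fun k => by simp [← map_mul, Equiv.mulLeft])
  have h2 : (μ k₀ - 1) * ∑ k : K, μ k = 0 := by
    rw [sub_mul, one_mul, h, sub_self]
  rcases mul_eq_zero.mp h2 with h' | h'
  · exact absurd (sub_eq_zero.mp h') hk₀
  · exact h'

/-- Convert a sum over a subtype to a dite-sum over the ambient fintype. -/
lemma sum_dite_subtype {α : Type*} [Fintype α] (p : α → Prop) (f : ∀ a, p a → ℂ) :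
    ∑ x : {a // p a}, f x x.2 = ∑ a : α, if h : p a then f a h else 0 := by
  classical
  set f' : α → ℂ := fun a => if h : p a then f a h else 0 with hf'
  have h1 : ∑ x : {a // p a}, f x x.2 = ∑ x : {a // p a}, f' x := by
    refine Finset.sum_congr rfl fun x _ => ?_
    rw [hf']
    simp [x.2]
  rw [h1]
  have h2 : ∑ x : {a // p a}, f' ↑x = ∑ a ∈ Finset.univ.filter p, f' a :=
    (Finset.sum_subtype _ (by simp) f').symm
  rw [h2, Finset.sum_filter]
  refine Finset.sum_congr rfl fun a _ => ?_
  by_cases h : p a <;> simp [hf', h]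

section Main
variable {G : Type} [Group G] [Fintype G] (N : Subgroup G) [N.Normal] [Fintype (G ⧸ N)]
  (H : Subgroup G) (lam : H →* ℂ)

/-- extension of `lam` by zero to `G`. -/
noncomputable def lamExt : G → ℂ := fun u => if hu : u ∈ H then lam ⟨u, hu⟩ else 0

/-- coset-sum function on the quotient. -/
noncomputable def Fq : G ⧸ N → ℂ := fun z =>
  ∑ hh : H, if ((hh : G) : G ⧸ N) = z then lam hh else 0

lemma fiber_card (c : G ⧸ N) :
    (Finset.univ.filter (fun x : G => (x : G ⧸ N) = c)).card = Nat.card N := by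
  obtain ⟨g₀, rfl⟩ := QuotientGroup.mk_surjective c
  rw [← Fintype.card_subtype, Nat.card_eq_fintype_card]
  apply Fintype.card_congr
  refine ⟨fun x => ⟨g₀⁻¹ * x.1, by
      have := x.2
      rwa [eq_comm, QuotientGroup.eq] at this⟩,
    fun n => ⟨g₀ * n.1, by
      rw [eq_comm, QuotientGroup.eq]
      simpa using n.2⟩, ?_, ?_⟩
  · intro x; ext; simp [mul_assoc]
  · intro n; ext; simp [mul_assoc]

/-- Sum over G of a function of the coset equals |N| times sum over the quotient. -/
lemma sum_fiber (Φ : G ⧸ N → ℂ) :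
    ∑ x : G, Φ (x : G ⧸ N) = (Nat.card N : ℂ) * ∑ c : G ⧸ N, Φ c := by
  rw [← Finset.sum_fiberwise' Finset.univ (fun x : G => (x : G ⧸ N)) Φ]
  rw [Finset.mul_sum]
  refine Finset.sum_congr rfl fun c _ => ?_
  rw [Finset.sum_const, fiber_card N c, nsmul_eq_mul]

/-- conjugation as an equiv of N -/
def conjN (x : G) : N ≃ N :=
  ⟨fun n => ⟨x⁻¹ * n * x, by
      simpa using Subgroup.Normal.conj_mem ‹N.Normal› n.1 n.2 x⁻¹⟩,
   fun m => ⟨x * m * x⁻¹, Subgroup.Normal.conj_mem ‹N.Normal› m.1 m.2 x⟩,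
   fun n => by ext; simp [mul_assoc], fun m => by ext; simp [mul_assoc]⟩

@[simp] lemma conjN_coe (x : G) (n : N) : ((conjN N x n : N) : G) = x⁻¹ * n * x := rfl

/-- Step C1 : inner sum over N equals Fq at the conjugated coset. -/
lemma inner_sum_eq (g x : G) :
    ∑ n : N, lamExt H lam (x⁻¹ * (g * n) * x) = Fq N H lam ((x : G ⧸ N)⁻¹ * (g : G ⧸ N) * (x : G ⧸ N)) := by
  set y : G := x⁻¹ * g * x with hy
  have step1 : ∑ n : N, lamExt H lam (x⁻¹ * (g * n) * x) = ∑ m : N, lamExt H lam (y * m) := by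
    refine Fintype.sum_equiv (conjN N x) _ _ (fun n => ?_)
    rw [hy]
    congr 1
    rw [conjN_coe]
    group
  rw [step1]
  have step2 : ∑ m : N, lamExt H lam (y * m) = ∑ u : G, if h : u ∈ N then lamExt H lam (y * u) else 0 :=
    sum_dite_subtype (fun u => u ∈ N) (fun u _ => lamExt H lam (y * u))
  rw [step2]
  have step3 : ∑ u : G, (if h : u ∈ N then lamExt H lam (y * u) else 0)
      = ∑ w : G, if h : y⁻¹ * w ∈ N then lamExt H lam w else 0 := by
    refine Fintype.sum_equiv (Equiv.mulLeft y) _ _ (fun u => ?_)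
    simp [Equiv.mulLeft]
  rw [step3]
  have hmk : ((y : G ⧸ N)) = (x : G ⧸ N)⁻¹ * (g : G ⧸ N) * (x : G ⧸ N) := by
    rw [hy]; simp
  rw [← hmk]
  -- now show ∑ w, (if y⁻¹ w ∈ N then lamExt w else 0) = Fq (mk y)
  have step4 : ∑ w : G, (if h : y⁻¹ * w ∈ N then lamExt H lam w else 0)
      = ∑ w : G, if h : w ∈ H then (if ((w : G ⧸ N)) = (y : G ⧸ N) then lam ⟨w, h⟩ else 0) else 0 := by
    refine Finset.sum_congr rfl fun w _ => ?_
    have hcond : (y⁻¹ * w ∈ N) ↔ ((w : G ⧸ N) = (y : G ⧸ N)) := by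
      rw [eq_comm, QuotientGroup.eq]
    by_cases hw : w ∈ H
    · by_cases hc : y⁻¹ * w ∈ N
      · rw [dif_pos hc, dif_pos hw, if_pos (hcond.mp hc)]
        simp [lamExt, hw]
      · rw [dif_neg hc, dif_pos hw, if_neg (fun hh => hc (hcond.mpr hh))]
    · simp [lamExt, hw]
  rw [step4, Fq]
  exact (sum_dite_subtype (fun w => w ∈ H) (fun w h => if ((w : G ⧸ N)) = (y : G ⧸ N) then lam ⟨w, h⟩ else 0)).symm

/-- Step C : the averaged induced character in terms of Fq. -/
lemma avg_cInd (g : G) :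
    ∑ n : N, cInd H (fun h => lam h) (g * n) =
      (Nat.card H : ℂ)⁻¹ * ((Nat.card N : ℂ) *
        ∑ c : G ⧸ N, Fq N H lam (c⁻¹ * (g : G ⧸ N) * c)) := by
  have expand : ∀ n : N, cInd H (fun h => lam h) (g * n)
      = (Nat.card H : ℂ)⁻¹ * ∑ x : G, lamExt H lam (x⁻¹ * (g * n) * x) := by
    intro n; rfl
  simp only [expand]
  rw [← Finset.mul_sum]
  congr 1
  rw [Finset.sum_comm]
  have h1 : ∀ x : G, ∑ n : N, lamExt H lam (x⁻¹ * (g * n) * x)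
      = Fq N H lam ((x : G ⧸ N)⁻¹ * (g : G ⧸ N) * (x : G ⧸ N)) := inner_sum_eq N H lam g
  calc ∑ x : G, ∑ n : N, lamExt H lam (x⁻¹ * (g * n) * x)
      = ∑ x : G, Fq N H lam ((x : G ⧸ N)⁻¹ * (g : G ⧸ N) * (x : G ⧸ N)) :=
        Finset.sum_congr rfl fun x _ => h1 x
    _ = (Nat.card N : ℂ) * ∑ c : G ⧸ N, Fq N H lam (c⁻¹ * (g : G ⧸ N) * c) :=
        sum_fiber N (fun c => Fq N H lam (c⁻¹ * (g : G ⧸ N) * c))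


/-- the composite hom H → G⧸N -/
def fHom : ↥H →* G ⧸ N := (QuotientGroup.mk' N).comp H.subtype

lemma fHom_apply (h : H) : fHom N H h = ((h : G) : G ⧸ N) := rfl

lemma mem_ker_fHom (h : H) : h ∈ (fHom N H).ker ↔ (h : G) ∈ N := by
  rw [MonoidHom.mem_ker, fHom_apply, QuotientGroup.eq_one_iff]

lemma Fq_out (z : G ⧸ N) (hz : z ∉ (fHom N H).range) : Fq N H lam z = 0 := by
  refine Finset.sum_eq_zero fun hh _ => ?_
  rw [if_neg]
  intro hc
  exact hz ⟨hh, hc⟩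

/-- sum of `lam` over the kernel of `fHom`. -/
noncomputable def SK : ℂ := ∑ k : H, if fHom N H k = 1 then lam k else 0

lemma Fq_in (h₀ : H) :
    Fq N H lam (fHom N H h₀) = lam h₀ * SK N H lam := by
  rw [Fq]
  simp only [← fHom_apply]
  rw [SK, Finset.mul_sum]
  refine Fintype.sum_equiv (Equiv.mulLeft h₀⁻¹) _ _ (fun k => ?_)
  show (if fHom N H k = fHom N H h₀ then lam k else 0)
      = lam h₀ * if fHom N H (h₀⁻¹ * k) = 1 then lam (h₀⁻¹ * k) else 0
  have hcond : (fHom N H (h₀⁻¹ * k) = 1) ↔ (fHom N H k = fHom N H h₀) := by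
    rw [map_mul, map_inv, inv_mul_eq_one, eq_comm]
  by_cases hc : fHom N H k = fHom N H h₀
  · rw [if_pos hc, if_pos (hcond.mpr hc), ← map_mul, mul_inv_cancel_left]
  · rw [if_neg hc, if_neg (fun hh => hc (hcond.mp hh)), mul_zero]

lemma SK_good (htriv : ∀ h : H, (h : G) ∈ N → lam h = 1) :
    SK N H lam = (Nat.card (fHom N H).ker : ℂ) := by
  rw [SK]
  have h1 : ∀ k : H, (if fHom N H k = 1 then lam k else 0) =
      (if fHom N H k = 1 then 1 else 0) := by
    intro k
    by_cases hc : fHom N H k = 1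
    · rw [if_pos hc, if_pos hc,
        htriv k ((mem_ker_fHom N H k).mp (MonoidHom.mem_ker.mpr hc))]
    · rw [if_neg hc, if_neg hc]
  rw [Finset.sum_congr rfl (fun k _ => h1 k)]
  rw [Finset.sum_boole]
  congr 1
  rw [Nat.card_eq_fintype_card, Fintype.card_subtype]
  congr 1
  ext k
  simp [MonoidHom.mem_ker]

lemma SK_bad (hbad : ∃ h : H, (h : G) ∈ N ∧ lam h ≠ 1) :
    SK N H lam = 0 := by
  obtain ⟨h₁, hmem, hne⟩ := hbad
  have hk1 : fHom N H h₁ = 1 := MonoidHom.mem_ker.mp ((mem_ker_fHom N H h₁).mpr hmem)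
  have h : lam h₁ * SK N H lam = SK N H lam := by
    rw [SK, Finset.mul_sum]
    refine Fintype.sum_equiv (Equiv.mulLeft h₁) _ _ (fun k => ?_)
    show (lam h₁ * if fHom N H k = 1 then lam k else 0)
        = if fHom N H (h₁ * k) = 1 then lam (h₁ * k) else 0
    have hcond : (fHom N H (h₁ * k) = 1) ↔ (fHom N H k = 1) := by
      rw [map_mul, hk1, one_mul]
    by_cases hc : fHom N H k = 1
    · rw [if_pos hc, if_pos (hcond.mpr hc), map_mul]
    · rw [if_neg hc, mul_zero, if_neg (fun hh => hc (hcond.mp hh))]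
  have h2 : (lam h₁ - 1) * SK N H lam = 0 := by
    rw [sub_mul, one_mul, h, sub_self]
  rcases mul_eq_zero.mp h2 with h' | h'
  · exact absurd (sub_eq_zero.mp h') hne
  · exact h'

/-- the linear character on the image subgroup -/
noncomputable def lamQ (htriv : ∀ x ∈ (fHom N H).ker, lam x = 1) :
    (fHom N H).range →* ℂ :=
  (QuotientGroup.lift (fHom N H).ker lam htriv).comp
    (QuotientGroup.quotientKerEquivRange (fHom N H)).symm.toMonoidHom

lemma lamQ_spec (htriv : ∀ x ∈ (fHom N H).ker, lam x = 1) (h₀ : H)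
    (hz : fHom N H h₀ ∈ (fHom N H).range) :
    lamQ N H lam htriv ⟨fHom N H h₀, hz⟩ = lam h₀ := by
  have he : (QuotientGroup.quotientKerEquivRange (fHom N H)) (QuotientGroup.mk h₀)
      = ⟨fHom N H h₀, hz⟩ := by
    apply Subtype.ext
    rfl
  have hsymm : (QuotientGroup.quotientKerEquivRange (fHom N H)).symm ⟨fHom N H h₀, hz⟩
      = QuotientGroup.mk h₀ := by
    rw [← he, MulEquiv.symm_apply_apply]
  rw [lamQ, MonoidHom.comp_apply, MulEquiv.coe_toMonoidHom, hsymm]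
  rfl

lemma Fq_good (htriv : ∀ h : H, (h : G) ∈ N → lam h = 1) (z : G ⧸ N) :
    Fq N H lam z = (Nat.card (fHom N H).ker : ℂ) *
      (@dite ℂ (z ∈ (fHom N H).range) (Classical.propDecidable _)
        (fun hz => lamQ N H lam (fun x hx => htriv x ((mem_ker_fHom N H x).mp hx)) ⟨z, hz⟩)
        (fun _ => 0)) := by
  by_cases hz : z ∈ (fHom N H).range
  · obtain ⟨h₀, rfl⟩ := hz
    rw [dif_pos (show (fHom N H h₀) ∈ (fHom N H).range from ⟨h₀, rfl⟩), Fq_in, SK_good N H lam htriv,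
      lamQ_spec N H lam _ h₀ ⟨h₀, rfl⟩, mul_comm]
  · rw [Fq_out N H lam z hz, dif_neg hz, mul_zero]

lemma Fq_bad (hbad : ∃ h : H, (h : G) ∈ N ∧ lam h ≠ 1) (z : G ⧸ N) :
    Fq N H lam z = 0 := by
  by_cases hz : z ∈ (fHom N H).range
  · obtain ⟨h₀, rfl⟩ := hz
    rw [Fq_in, SK_bad N H lam hbad, mul_zero]
  · exact Fq_out N H lam z hz

lemma card_split : (Nat.card H : ℂ) =
    (Nat.card (fHom N H).range : ℂ) * (Nat.card (fHom N H).ker : ℂ) := by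
  have h1 : Nat.card H = Nat.card (↥H ⧸ (fHom N H).ker) * Nat.card (fHom N H).ker :=
    Subgroup.card_eq_card_quotient_mul_card_subgroup _
  have h2 : Nat.card (↥H ⧸ (fHom N H).ker) = Nat.card (fHom N H).range :=
    Nat.card_congr (QuotientGroup.quotientKerEquivRange (fHom N H)).toEquiv
  rw [h1, h2]
  push_cast
  ring

set_option maxHeartbeats 2000000 in
/-- Lemma A : the good case. -/
lemma cInd_good (htriv : ∀ h : H, (h : G) ∈ N → lam h = 1) (g : G) :
    cInd (fHom N H).range
      (fun h => lamQ N H lam (fun x hx => htriv x ((mem_ker_fHom N H x).mp hx)) h)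
      ((g : G ⧸ N)) =
    (Nat.card N : ℂ)⁻¹ * ∑ n : N, cInd H (fun h => lam h) (g * n) := by
  have hNne : (Nat.card N : ℂ) ≠ 0 := by
    exact_mod_cast (Nat.card_pos (α := N)).ne'
  have hkerne : (Nat.card (fHom N H).ker : ℂ) ≠ 0 := by
    exact_mod_cast (Nat.card_pos (α := (fHom N H).ker)).ne'
  have hrangene : (Nat.card (fHom N H).range : ℂ) ≠ 0 := by
    exact_mod_cast (Nat.card_pos (α := (fHom N H).range)).ne'
  rw [avg_cInd]
  rw [cInd]
  have hterm : ∀ c : G ⧸ N,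
      (@dite ℂ (c⁻¹ * ((g : G ⧸ N)) * c ∈ (fHom N H).range) (Classical.propDecidable _)
        (fun h => lamQ N H lam (fun x hx => htriv x ((mem_ker_fHom N H x).mp hx))
          ⟨c⁻¹ * ((g : G ⧸ N)) * c, h⟩) (fun _ => 0))
      = (Nat.card (fHom N H).ker : ℂ)⁻¹ * Fq N H lam (c⁻¹ * ((g : G ⧸ N)) * c) := by
    intro c
    rw [Fq_good N H lam htriv (c⁻¹ * ((g : G ⧸ N)) * c), inv_mul_cancel_left₀ hkerne]
  have hS : (∑ x : G ⧸ N, @dite ℂ (x⁻¹ * ((g : G ⧸ N)) * x ∈ (fHom N H).range)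
        (Classical.propDecidable _)
        (fun h => lamQ N H lam (fun x hx => htriv x ((mem_ker_fHom N H x).mp hx))
          ⟨x⁻¹ * ((g : G ⧸ N)) * x, h⟩) (fun _ => 0))
      = (Nat.card (fHom N H).ker : ℂ)⁻¹ * ∑ c : G ⧸ N, Fq N H lam (c⁻¹ * ((g : G ⧸ N)) * c) := by
    rw [Finset.mul_sum]
    exact Finset.sum_congr rfl (fun c _ => hterm c)
  rw [hS, card_split N H]
  field_simp

/-- Lemma B : the bad case. -/
lemma cInd_bad (hbad : ∃ h : H, (h : G) ∈ N ∧ lam h ≠ 1) (g : G) :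
    ∑ n : N, cInd H (fun h => lam h) (g * n) = 0 := by
  rw [avg_cInd]
  have hz : ∀ c : G ⧸ N, Fq N H lam (c⁻¹ * ((g : G ⧸ N)) * c) = 0 :=
    fun c => Fq_bad N H lam hbad _
  simp only [hz]
  simp

end Main
section Corr
variable {G : Type} [Group G] [Fintype G] (N : Subgroup G) [N.Normal]

lemma chars_coset_const (X : Set (G → ℂ))
    (hirr : ∀ χ ∈ X, IsIrrChar G χ) (hker : ∀ χ ∈ X, ∀ n ∈ N, χ n = χ 1) :
    ∀ χ ∈ X, ∀ (g : G), ∀ n ∈ N, χ (g * n) = χ g := by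
  intro χ hχ g n hn
  obtain ⟨V, _, hV⟩ := hirr χ hχ
  subst hV
  exact char_coset_const N V (hker _ hχ) g n hn

lemma superchar_coset_const (X : Set (G → ℂ))
    (hirr : ∀ χ ∈ X, IsIrrChar G χ) (hker : ∀ χ ∈ X, ∀ n ∈ N, χ n = χ 1)
    (g : G) (n : G) (hn : n ∈ N) : superchar X (g * n) = superchar X g := by
  rw [superchar, superchar]
  exact finsum_mem_congr rfl (fun χ hχ => by
    rw [chars_coset_const N X hirr hker χ hχ g n hn])

lemma superchar_quot (X : Set (G → ℂ))
    (hirr : ∀ χ ∈ X, IsIrrChar G χ) (hker : ∀ χ ∈ X, ∀ n ∈ N, χ n = χ 1)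
    (g : G) :
    superchar {χ' : G ⧸ N → ℂ | (fun g : G => χ' (g : G ⧸ N)) ∈ X} ((g : G ⧸ N))
      = superchar X g := by
  set Y : Set ((G ⧸ N) → ℂ) := {χ' : G ⧸ N → ℂ | (fun g : G => χ' (g : G ⧸ N)) ∈ X} with hY
  set Φ : ((G ⧸ N) → ℂ) → (G → ℂ) := fun ψ => fun g : G => ψ ((g : G ⧸ N)) with hΦ
  have hXimg : X = Φ '' Y := by
    ext χ
    constructor
    · intro hχ
      refine ⟨fun z => χ (Quotient.out z), ?_, ?_⟩
      · show Φ (fun z => χ (Quotient.out z)) ∈ X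
        have hfun : Φ (fun z => χ (Quotient.out z)) = χ := by
          funext x
          show χ (Quotient.out ((x : G ⧸ N))) = χ x
          have hmk : ((Quotient.out ((x : G ⧸ N)) : G) : G ⧸ N) = (x : G ⧸ N) :=
            Quotient.out_eq _
          have hmem : x⁻¹ * Quotient.out ((x : G ⧸ N)) ∈ N := by
            rw [← QuotientGroup.eq]
            exact hmk.symm
          have hx : Quotient.out ((x : G ⧸ N)) = x * (x⁻¹ * Quotient.out ((x : G ⧸ N))) := by
            group
          rw [hx, chars_coset_const N X hirr hker χ hχ x _ hmem]
        rw [hfun]; exact hχ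
      · funext x
        show χ (Quotient.out ((x : G ⧸ N))) = χ x
        have hmk : ((Quotient.out ((x : G ⧸ N)) : G) : G ⧸ N) = (x : G ⧸ N) :=
          Quotient.out_eq _
        have hmem : x⁻¹ * Quotient.out ((x : G ⧸ N)) ∈ N := by
          rw [← QuotientGroup.eq]
          exact hmk.symm
        have hx : Quotient.out ((x : G ⧸ N)) = x * (x⁻¹ * Quotient.out ((x : G ⧸ N))) := by
          group
        rw [hx, chars_coset_const N X hirr hker χ hχ x _ hmem]
    · rintro ⟨ψ, hψ, rfl⟩
      exact hψ
  have hinj : Set.InjOn Φ Y := by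
    intro ψ₁ _ ψ₂ _ hψ
    funext z
    obtain ⟨x, rfl⟩ := QuotientGroup.mk_surjective z
    exact congrFun hψ x
  rw [superchar, superchar, hXimg, finsum_mem_image hinj]
  refine finsum_mem_congr rfl (fun ψ _ => ?_)
  show ψ ((1 : G) : G ⧸ N) * ψ ((g : G ⧸ N)) = ψ 1 * ψ ((g : G ⧸ N))
  rw [QuotientGroup.mk_one]

end Corr

/-- Theorem 2.6: if `G` is `C`-quasi-monomial and `N` is `C`-normal, then `G/N` is
`C^{G/N}`-quasi-monomial. -/
theorem cQuasiMonomial_quotient (G : Type) [Group G] [Fintype G]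
    (C : SCTheory G) (N : Subgroup G) [N.Normal] [Fintype (G ⧸ N)]
    (hN : CNormal C N) (Cq : SCTheory (G ⧸ N)) (hq : IsQuotientTheory C N Cq)
    (h : CQuasiMonomial C) : CQuasiMonomial Cq := by
  intro Y hY
  rw [hq.1] at hY
  obtain ⟨X, hX, hkerX, rfl⟩ := hY
  have hirrX : ∀ χ ∈ X, IsIrrChar G χ := by
    intro χ hχ
    have hmem : χ ∈ ⋃₀ C.XX := ⟨X, hX, hχ⟩
    rw [C.XX_cover] at hmem
    exact hmem
  obtain ⟨t, H, lam, d, hd, hsum⟩ := h X hX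
  have hsum' : ∀ x : G, (∑ i : Fin t, cInd (H i) (fun hh => lam i hh) x)
      = (d : ℂ) * superchar X x := by
    intro x
    have := congrFun hsum x
    simpa [Finset.sum_apply] using this
  set P : Fin t → Prop := fun i => ∀ hh : (H i), ((hh : G) ∈ N) → lam i hh = 1 with hP
  set S : Finset (Fin t) := Finset.univ.filter P with hS
  have hmemS : ∀ i ∈ S, P i := fun i hi => (Finset.mem_filter.mp hi).2
  set e : ↥S ≃ Fin S.card := S.equivFin with he
  refine ⟨S.card,
    fun j => (fHom N (H ((e.symm j) : Fin t))).range,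
    fun j => lamQ N (H ((e.symm j) : Fin t)) (lam ((e.symm j) : Fin t))
      (fun x hx => hmemS _ (e.symm j).2 x
        ((mem_ker_fHom N (H ((e.symm j) : Fin t)) x).mp hx)),
    d, hd, ?_⟩
  funext z
  obtain ⟨g, rfl⟩ := QuotientGroup.mk_surjective z
  rw [Finset.sum_apply]
  have hNne : (Nat.card N : ℂ) ≠ 0 := by
    exact_mod_cast (Nat.card_pos (α := N)).ne'
  set Ψ : Fin t → ℂ := fun i =>
    (Nat.card N : ℂ)⁻¹ * ∑ n : N, cInd (H i) (fun hh => lam i hh) (g * n) with hΨ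
  have step1 : ∑ j : Fin S.card,
      cInd (fHom N (H ((e.symm j) : Fin t))).range
        (fun hh => lamQ N (H ((e.symm j) : Fin t)) (lam ((e.symm j) : Fin t))
          (fun x hx => hmemS _ (e.symm j).2 x
            ((mem_ker_fHom N (H ((e.symm j) : Fin t)) x).mp hx)) hh)
        ((g : G ⧸ N))
      = ∑ j : Fin S.card, Ψ ((e.symm j) : Fin t) := by
    refine Finset.sum_congr rfl (fun j _ => ?_)
    exact cInd_good N (H ((e.symm j) : Fin t)) (lam ((e.symm j) : Fin t))
      (hmemS _ (e.symm j).2) g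
  rw [step1]
  have step2 : ∑ j : Fin S.card, Ψ ((e.symm j) : Fin t) = ∑ i ∈ S, Ψ i := by
    rw [← Finset.sum_coe_sort S Ψ]
    exact Equiv.sum_comp e.symm (fun s : ↥S => Ψ (s : Fin t))
  rw [step2]
  have step3 : ∑ i ∈ S, Ψ i = ∑ i : Fin t, Ψ i := by
    refine Finset.sum_subset (Finset.subset_univ S) (fun i _ hi => ?_)
    have hbad : ∃ hh : (H i), ((hh : G) ∈ N) ∧ lam i hh ≠ 1 := by
      rw [hS, Finset.mem_filter] at hi
      push_neg at hi
      have hnp : ¬ ∀ hh : (H i), ((hh : G) ∈ N) → lam i hh = 1 := hi (Finset.mem_univ i)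
      push_neg at hnp
      exact hnp
    rw [hΨ]
    simp only [cInd_bad N (H i) (lam i) hbad g, mul_zero]
  rw [step3]
  have step4 : ∑ i : Fin t, Ψ i = (Nat.card N : ℂ)⁻¹ *
      ∑ n : N, ∑ i : Fin t, cInd (H i) (fun hh => lam i hh) (g * n) := by
    have h1 : ∑ i : Fin t, Ψ i = (Nat.card N : ℂ)⁻¹ *
        ∑ i : Fin t, ∑ n : N, cInd (H i) (fun hh => lam i hh) (g * n) := by
      rw [Finset.mul_sum]
    rw [h1, Finset.sum_comm]
  rw [step4]
  have step5 : ∀ n : N, (∑ i : Fin t, cInd (H i) (fun hh => lam i hh) (g * n))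
      = (d : ℂ) * superchar X g := by
    intro n
    rw [hsum' (g * n), superchar_coset_const N X hirrX hkerX g n n.2]
  rw [Finset.sum_congr rfl (fun n _ => step5 n), Finset.sum_const, Finset.card_univ,
    nsmul_eq_mul, ← Nat.card_eq_fintype_card]
  rw [superchar_quot N X hirrX hkerX g]
  field_simp
end

section
/- Let G be a finite group with supercharacter theory C = (𝒳,𝒦), 𝒳 = {X₁,…,X_m}. Then G is C-almost monomial if and only if for every k ∈ {1,…,m} there exist subgroups H₁,…,H_s ≤ G and linear characters λᵢ of Hᵢ such that λ₁^G + ⋯ + λ_s^G = Σ_{i≠k} αᵢ σ_{X_i} with all αᵢ > 0 (i ≠ k). -/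
open scoped Classical BigOperators

section AuxCAM

variable {G : Type} [Group G] [Fintype G]

lemma cInd_prepend (H₀ : Subgroup G) (l₀ : H₀ →* ℂ) (t : ℕ)
    (H : Fin t → Subgroup G) (lam : ∀ i, H i →* ℂ) :
    ∃ (H' : Fin (t+1) → Subgroup G) (lam' : ∀ i, H' i →* ℂ),
      (∑ i, cInd (H' i) fun h => lam' i h)
        = cInd H₀ (fun h => l₀ h) + ∑ i, cInd (H i) (fun h => lam i h) := by
  refine ⟨Fin.cases H₀ H, Fin.cases l₀ lam, ?_⟩
  rw [Fin.sum_univ_succ]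
  rfl

lemma cInd_concat (t₂ : ℕ) (H₂ : Fin t₂ → Subgroup G) (lam₂ : ∀ i, H₂ i →* ℂ) :
    ∀ (t₁ : ℕ) (H₁ : Fin t₁ → Subgroup G) (lam₁ : ∀ i, H₁ i →* ℂ),
    ∃ (t : ℕ) (H : Fin t → Subgroup G) (lam : ∀ i, H i →* ℂ),
      (∑ i, cInd (H i) fun h => lam i h)
        = (∑ i, cInd (H₁ i) fun h => lam₁ i h)
          + ∑ i, cInd (H₂ i) fun h => lam₂ i h := by
  intro t₁
  induction t₁ with
  | zero => intro H₁ lam₁; exact ⟨t₂, H₂, lam₂, by simp⟩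
  | succ n ih =>
    intro H₁ lam₁
    obtain ⟨t, H, lam, heq⟩ := ih (fun i => H₁ i.succ) (fun i => lam₁ i.succ)
    obtain ⟨H', lam', heq'⟩ := cInd_prepend (H₁ 0) (lam₁ 0) t H lam
    refine ⟨t + 1, H', lam', ?_⟩
    rw [heq', heq, Fin.sum_univ_succ, add_assoc]

lemma SCTheory.XX_finite (C : SCTheory G) : C.XX.Finite := by
  have hKK : C.KK.Finite := Set.toFinite _
  haveI : Finite ↥C.KK := hKK
  haveI : Nonempty ↥C.KK := ⟨⟨{1}, C.one_mem⟩⟩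
  have hpos : 0 < Nat.card ↥C.XX := by
    rw [C.card_eq]; exact Nat.card_pos
  rw [← Set.finite_coe_iff]
  by_contra h
  rw [not_finite_iff_infinite] at h
  simp [Nat.card_eq_zero_of_infinite] at hpos

end AuxCAM

/-- Proposition 2.11: `G` is `C`-almost monomial iff for every part `Xk` there are
induced linear characters summing to a combination of all supercharacters with
positive coefficients except `Xk`, whose coefficient is zero. -/
theorem cAlmostMonomial_iff_complement (G : Type) [Group G] [Fintype G]
    (C : SCTheory G) :
    CAlmostMonomial C ↔
      ∀ Xk ∈ C.XX,
        ∃ (s : ℕ) (H : Fin s → Subgroup G) (lam : ∀ i, (H i) →* ℂ)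
          (α : Set (G → ℂ) → ℕ),
          α Xk = 0 ∧ (∀ X ∈ C.XX, X ≠ Xk → 0 < α X) ∧
          (∑ i, cInd (H i) (fun h => lam i h)) =
            fun g => ∑ᶠ X ∈ C.XX, (α X : ℂ) * superchar X g := by
  constructor
  · intro hAM Xk hXk
    have hfin := C.XX_finite
    -- induct over the finite set of parts different from Xk
    have key : ∀ T : Finset (Set (G → ℂ)), (∀ X ∈ T, X ∈ C.XX ∧ X ≠ Xk) →
        ∃ (s : ℕ) (H : Fin s → Subgroup G) (lam : ∀ i, (H i) →* ℂ)
          (α : Set (G → ℂ) → ℕ),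
          α Xk = 0 ∧ (∀ X ∈ T, 0 < α X) ∧
          (∑ i, cInd (H i) (fun h => lam i h)) =
            fun g => ∑ᶠ X ∈ C.XX, (α X : ℂ) * superchar X g := by
      intro T
      induction T using Finset.induction_on with
      | empty =>
        intro _
        refine ⟨0, fun i => ⊥, fun i => 1, fun _ => 0, rfl, by simp, ?_⟩
        funext g
        simp
      | @insert Xl T hXlT ih =>
        intro hT
        obtain ⟨hXl, hXlk⟩ := hT Xl (Finset.mem_insert_self _ _)
        obtain ⟨t₁, H₁, lam₁, α, hαpos, hαk, heq₁⟩ :=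
          hAM Xl hXl Xk hXk hXlk
        obtain ⟨t₂, H₂, lam₂, β, hβk, hβpos, heq₂⟩ :=
          ih fun X hX => hT X (Finset.mem_insert_of_mem hX)
        obtain ⟨t, H, lam, heq⟩ := cInd_concat t₂ H₂ lam₂ t₁ H₁ lam₁
        refine ⟨t, H, lam, fun X => α X + β X, ?_, ?_, ?_⟩
        · simp [hαk, hβk]
        · intro X hX
          rcases Finset.mem_insert.mp hX with rfl | hX
          · exact Nat.lt_of_lt_of_le hαpos (Nat.le_add_right _ _)
          · exact Nat.lt_of_lt_of_le (hβpos X hX) (Nat.le_add_left _ _)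
        · rw [heq, heq₁, heq₂]
          funext g
          have := finsum_mem_add_distrib
            (f := fun X => (α X : ℂ) * superchar X g)
            (g := fun X => (β X : ℂ) * superchar X g) hfin
          simp only [Pi.add_apply]
          rw [← this]
          refine finsum_mem_congr rfl fun X _ => ?_
          push_cast
          ring
    obtain ⟨s, H, lam, α, hk, hpos, heq⟩ :=
      key (hfin.toFinset.erase Xk) (by
        intro X hX
        rcases Finset.mem_erase.mp hX with ⟨hne, hmem⟩
        exact ⟨hfin.mem_toFinset.mp hmem, hne⟩)
    refine ⟨s, H, lam, α, hk, ?_, heq⟩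
    intro X hX hne
    exact hpos X (Finset.mem_erase.mpr ⟨hne, hfin.mem_toFinset.mpr hX⟩)
  · intro h Xk hXk Xl hXl hne
    obtain ⟨s, H, lam, α, hl, hpos, heq⟩ := h Xl hXl
    exact ⟨s, H, lam, α, hpos Xk hXk hne, hl, heq⟩
end
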